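/- arXiv:2211.00145 — 2 statements merged into one kernel-verified Lean document; each statement's English description precedes it below -/
import Mathlib

section
/- For every fixed β > -1, the limit as z → 0 with Re(z) > 0 of z^{1+β} · Σ_{k≥2} (log k)^β / k^{1+z} equals Γ(1+β). -/
open Filter Real Set MeasureTheory

namespace Stmt0Aux

/-- The summand/integrand on the `t` side. -/
noncomputable def f (β : ℝ) (z : ℂ) (t : ℝ) : ℂ :=
  ((Real.log t ^ β : ℝ) : ℂ) * (t : ℂ) ^ (-(1 + z))

/-- The integrand after substitution `t = e^u`. -/
noncomputable def g (β : ℝ) (z : ℂ) (u : ℝ) : ℂ :=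
  ((u ^ β : ℝ) : ℂ) * Complex.exp (-(z * u))

/-- Derivative of `f` in `t`. -/
noncomputable def fd (β : ℝ) (z : ℂ) (t : ℝ) : ℂ :=
  ((t⁻¹ * β * Real.log t ^ (β - 1) : ℝ) : ℂ) * (t : ℂ) ^ (-(1 + z)) +
    ((Real.log t ^ β : ℝ) : ℂ) * (-(1 + z) * (t : ℂ) ^ (-(1 + z) - 1))

/-- Summable bound for the sum-vs-integral error terms. -/
noncomputable def D (β : ℝ) (k : ℕ) : ℝ :=
  (|β| * 2 ^ |β - 1| * Real.log ((k : ℝ) + 2) ^ (β - 1) +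
      2 * 2 ^ |β| * Real.log ((k : ℝ) + 2) ^ β) / ((k : ℝ) + 2) ^ 2

lemma intOn_rpow_exp (p : ℝ) (hp : -1 < p) {r : ℝ} (hr : 0 < r) :
    IntegrableOn (fun u : ℝ => u ^ p * Real.exp (-(r * u))) (Ioi 0) := by
  have h0 : IntegrableOn (fun x : ℝ => Real.exp (-x) * x ^ p) (Ioi 0) := by
    simpa using Real.GammaIntegral_convergent (by linarith : (0:ℝ) < p + 1)
  have h1 : IntegrableOn (fun u : ℝ => Real.exp (-(r * u)) * (r * u) ^ p) (Ioi 0) := by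
    have := (integrableOn_Ioi_comp_mul_left_iff
      (fun x : ℝ => Real.exp (-x) * x ^ p) 0 hr).mpr (by simpa using h0)
    simpa using this
  have h2 := h1.const_mul ((r ^ p)⁻¹)
  apply IntegrableOn.congr_fun h2 ?_ measurableSet_Ioi
  intro u hu
  have hu0 : (0:ℝ) < u := hu
  simp only
  rw [Real.mul_rpow hr.le hu0.le]
  have hne : r ^ p ≠ 0 := (Real.rpow_pos_of_pos hr p).ne'
  field_simp

lemma g_contOn (β : ℝ) (z : ℂ) : ContinuousOn (g β z) (Ioi 0) := by
  apply ContinuousOn.mul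
  · exact Complex.continuous_ofReal.comp_continuousOn
      (continuousOn_id.rpow_const (fun x hx => Or.inl (ne_of_gt hx)))
  · exact (Complex.continuous_exp.comp
      ((continuous_const.mul Complex.continuous_ofReal).neg)).continuousOn

lemma g_integrableOn {β : ℝ} (hβ : -1 < β) {z : ℂ} (hz : 0 < z.re) :
    IntegrableOn (g β z) (Ioi 0) := by
  apply Integrable.mono' (intOn_rpow_exp β hβ hz)
    ((g_contOn β z).aestronglyMeasurable measurableSet_Ioi)
  filter_upwards [ae_restrict_mem measurableSet_Ioi] with u hu
  have hu0 : (0:ℝ) < u := hu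
  unfold g
  rw [norm_mul, Complex.norm_exp]
  simp only [Complex.norm_real, Real.norm_eq_abs, abs_of_nonneg (Real.rpow_nonneg hu0.le β)]
  gcongr
  simp [Complex.mul_re]

lemma J_diffAt {β : ℝ} (hβ : -1 < β) {z₀ : ℂ} (h : 0 < z₀.re) :
    DifferentiableAt ℂ (fun z => ∫ u in Ioi (0 : ℝ), g β z u) z₀ := by
  set ε := z₀.re / 2 with hε
  have hε0 : 0 < ε := by rw [hε]; positivity
  have hcont' : ContinuousOn
      (fun u : ℝ => ((u ^ β : ℝ) : ℂ) * (Complex.exp (-(z₀ * u)) * -(1 * (u : ℂ))))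
      (Ioi 0) := by
    apply ContinuousOn.mul
    · exact Complex.continuous_ofReal.comp_continuousOn
        (continuousOn_id.rpow_const (fun x hx => Or.inl (ne_of_gt hx)))
    · apply Continuous.continuousOn
      exact (Complex.continuous_exp.comp
        ((continuous_const.mul Complex.continuous_ofReal).neg)).mul
        ((continuous_const.mul Complex.continuous_ofReal).neg)
  have key := hasDerivAt_integral_of_dominated_loc_of_deriv_le (μ := volume.restrict (Ioi 0))
    (F := fun z u => g β z u)
    (F' := fun z (u : ℝ) => ((u ^ β : ℝ) : ℂ) * (Complex.exp (-(z * u)) * -(1 * (u : ℂ))))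
    (x₀ := z₀) (bound := fun u => u ^ (β + 1) * Real.exp (-(ε * u))) (Metric.ball_mem_nhds z₀ hε0)
    (Filter.Eventually.of_forall fun z =>
      (g_contOn β z).aestronglyMeasurable measurableSet_Ioi)
    (g_integrableOn hβ h)
    (hcont'.aestronglyMeasurable measurableSet_Ioi)
    ?_ (intOn_rpow_exp (β + 1) (by linarith) hε0) ?_
  · exact key.2.differentiableAt
  · -- bound
    filter_upwards [ae_restrict_mem measurableSet_Ioi] with u hu
    intro x hx
    have hu0 : (0:ℝ) < u := hu
    have hxre : ε ≤ x.re := by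
      have hd : |x.re - z₀.re| ≤ ‖x - z₀‖ := by
        simpa using Complex.abs_re_le_norm (x - z₀)
      have hdist : ‖x - z₀‖ < ε := by
        simpa [Complex.dist_eq] using (Metric.mem_ball.mp hx)
      have h2 : -ε < x.re - z₀.re := neg_lt_of_abs_lt (lt_of_le_of_lt hd hdist)
      have h3 : z₀.re - ε = ε := by rw [hε]; ring
      linarith
    rw [norm_mul, norm_mul, Complex.norm_exp]
    simp only [Complex.norm_real, Real.norm_eq_abs, norm_neg, norm_one, norm_mul,
      abs_of_nonneg (Real.rpow_nonneg hu0.le β), one_mul, Complex.norm_natCast]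
    have hre : (-(x * (u:ℂ))).re = -(x.re * u) := by simp [Complex.mul_re]
    rw [hre]
    rw [abs_of_nonneg hu0.le]
    calc u ^ β * (Real.exp (-(x.re * u)) * u)
        = u ^ (β + 1) * Real.exp (-(x.re * u)) := by
          rw [Real.rpow_add_one hu0.ne']
          ring
    _ ≤ u ^ (β + 1) * Real.exp (-(ε * u)) := by
        apply mul_le_mul_of_nonneg_left _ (Real.rpow_nonneg hu0.le _)
        apply Real.exp_le_exp.mpr
        have : ε * u ≤ x.re * u := mul_le_mul_of_nonneg_right hxre hu0.le
        linarith
  · -- differentiability pointwise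
    filter_upwards [ae_restrict_mem measurableSet_Ioi] with u hu
    intro x _
    have h1 : HasDerivAt (fun z : ℂ => Complex.exp (-(z * u)))
        (Complex.exp (-(x * u)) * -(1 * (u:ℂ))) x :=
      (((hasDerivAt_id x).mul_const ((u:ℝ) : ℂ)).neg).cexp
    exact h1.const_mul _

lemma J_real {β : ℝ} (hβ : -1 < β) {x : ℝ} (hx : 0 < x) :
    ∫ u in Ioi (0 : ℝ), g β ((x : ℝ) : ℂ) u
      = ((Real.Gamma (1 + β) : ℝ) : ℂ) * ((x : ℝ) : ℂ) ^ (-((1 + β : ℝ) : ℂ)) := by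
  have ha : (0:ℝ) < (((1 + β : ℝ) : ℂ)).re := by simp; linarith
  have hmain := Complex.integral_cpow_mul_exp_neg_mul_Ioi ha hx
  have hLHS : ∫ u in Ioi (0 : ℝ), g β ((x : ℝ) : ℂ) u
      = ∫ t in Ioi (0:ℝ), (t : ℂ) ^ (((1 + β : ℝ) : ℂ) - 1) * Complex.exp (-((x:ℂ) * t)) := by
    apply setIntegral_congr_fun measurableSet_Ioi
    intro t ht
    have ht0 : (0:ℝ) < t := ht
    unfold g
    congr 1
    rw [show (((1 + β : ℝ) : ℂ) - 1) = ((β : ℝ) : ℂ) by push_cast; ring]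
    exact Complex.ofReal_cpow ht0.le β
  rw [hLHS, hmain, Complex.Gamma_ofReal, one_div,
    Complex.inv_cpow _ _ (by rw [Complex.arg_ofReal_of_nonneg hx.le]; exact Ne.symm Real.pi_ne_zero),
    ← Complex.cpow_neg]
  exact mul_comm _ _

lemma J_eq {β : ℝ} (hβ : -1 < β) {z : ℂ} (hz : 0 < z.re) :
    ∫ u in Ioi (0 : ℝ), g β z u
      = ((Real.Gamma (1 + β) : ℝ) : ℂ) * z ^ (-((1 + β : ℝ) : ℂ)) := by
  set U : Set ℂ := {w : ℂ | 0 < w.re} with hU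
  have hUopen : IsOpen U := by
    exact isOpen_lt continuous_const Complex.continuous_re
  have hJdiff : DifferentiableOn ℂ (fun w => ∫ u in Ioi (0 : ℝ), g β w u) U :=
    fun w hw => (J_diffAt hβ hw).differentiableWithinAt
  have hJan : AnalyticOnNhd ℂ (fun w => ∫ u in Ioi (0 : ℝ), g β w u) U :=
    hJdiff.analyticOnNhd hUopen
  have hGan : AnalyticOnNhd ℂ
      (fun w => ((Real.Gamma (1 + β) : ℝ) : ℂ) * w ^ (-((1 + β : ℝ) : ℂ))) U := by
    refine DifferentiableOn.analyticOnNhd ?_ hUopen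
    intro w hw
    have hslit : w ∈ Complex.slitPlane := Or.inl hw
    exact (((Complex.hasStrictDerivAt_cpow_const hslit).hasDerivAt.differentiableAt).const_mul
      _).differentiableWithinAt
  have hpre : IsPreconnected U := (convex_halfSpace_re_gt 0).isPreconnected
  have h1U : (1 : ℂ) ∈ U := by simp [hU]
  have hfreq : ∃ᶠ w in nhdsWithin (1 : ℂ) {(1 : ℂ)}ᶜ,
      (fun w => ∫ u in Ioi (0 : ℝ), g β w u) w
        = (fun w => ((Real.Gamma (1 + β) : ℝ) : ℂ) * w ^ (-((1 + β : ℝ) : ℂ))) w := by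
    have hseq : Tendsto (fun n : ℕ => (((1 + ((n:ℝ) + 1)⁻¹ : ℝ)) : ℂ)) atTop
        (nhdsWithin (1 : ℂ) {(1 : ℂ)}ᶜ) := by
      apply tendsto_nhdsWithin_of_tendsto_nhds_of_eventually_within
      · have hre : Tendsto (fun n : ℕ => (1 + ((n:ℝ) + 1)⁻¹ : ℝ)) atTop (nhds 1) := by
          have := tendsto_one_div_add_atTop_nhds_zero_nat (𝕜 := ℝ)
          have h2 := tendsto_const_nhds (x := (1:ℝ)) (f := atTop (α := ℕ)) |>.add this
          simpa [one_div] using h2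
        have := (Complex.continuous_ofReal.tendsto (1:ℝ)).comp hre
        simpa [Function.comp_def] using this
      · filter_upwards with n
        simp only [mem_compl_iff, mem_singleton_iff]
        intro hcontra
        rw [show ((1:ℂ)) = (((1:ℝ)) : ℂ) by norm_num] at hcontra
        have := Complex.ofReal_inj.mp hcontra
        have hpos : (0:ℝ) < ((n:ℝ) + 1)⁻¹ := by positivity
        linarith
    apply hseq.frequently
    apply Filter.Eventually.frequently
    filter_upwards with n
    exact J_real hβ (by positivity)
  exact hJan.eqOn_of_preconnected_of_frequently_eq hGan hpre h1U hfreq hz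

lemma key_subst (β : ℝ) (z : ℂ) (x : ℝ) :
    |Real.exp x| • f β z (Real.exp x) = g β z x := by
  have hx : ((Real.exp x : ℝ) : ℂ) ≠ 0 := by
    simpa using (Real.exp_pos x).ne'
  have hlog : Complex.log ((Real.exp x : ℝ) : ℂ) = (x : ℂ) := by
    rw [Complex.ofReal_exp, Complex.log_exp] <;>
      simp [Real.pi_pos.le, Real.pi_pos]
  unfold f g
  rw [Real.log_exp, abs_of_pos (Real.exp_pos x)]
  rw [Complex.cpow_def_of_ne_zero hx, hlog]
  rw [Complex.real_smul, Complex.ofReal_exp]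
  rw [show Complex.exp (x : ℂ) * (((x ^ β : ℝ) : ℂ) * Complex.exp ((x:ℂ) * -(1 + z)))
      = ((x ^ β : ℝ) : ℂ) * (Complex.exp ((x:ℂ)) * Complex.exp ((x:ℂ) * -(1 + z))) by ring,
    ← Complex.exp_add]
  congr 2
  ring

lemma image_exp : Real.exp '' Ioi (Real.log 2) = Ioi (2 : ℝ) := by
  ext x
  simp only [mem_image, mem_Ioi]
  constructor
  · rintro ⟨u, hu, rfl⟩
    calc (2:ℝ) = Real.exp (Real.log 2) := (Real.exp_log two_pos).symm
    _ < Real.exp u := Real.exp_lt_exp.mpr hu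
  · intro hx
    exact ⟨Real.log x, Real.log_lt_log two_pos hx, Real.exp_log (by linarith)⟩

lemma integral_f_Ioi2 (β : ℝ) (z : ℂ) :
    ∫ t in Ioi (2 : ℝ), f β z t = ∫ x in Ioi (Real.log 2), g β z x := by
  rw [← image_exp, integral_image_eq_integral_abs_deriv_smul measurableSet_Ioi
    (fun x _ => (Real.hasDerivAt_exp x).hasDerivWithinAt) Real.exp_injective.injOn]
  exact setIntegral_congr_fun measurableSet_Ioi fun x _ => key_subst β z x

lemma integrableOn_f_Ioi2 {β : ℝ} (hβ : -1 < β) {z : ℂ} (hz : 0 < z.re) :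
    IntegrableOn (f β z) (Ioi (2 : ℝ)) := by
  rw [← image_exp, integrableOn_image_iff_integrableOn_abs_deriv_smul measurableSet_Ioi
    (fun x _ => (Real.hasDerivAt_exp x).hasDerivWithinAt) Real.exp_injective.injOn]
  refine ((g_integrableOn hβ hz).mono_set
    (Ioi_subset_Ioi (Real.log_nonneg one_le_two))).congr_fun ?_ measurableSet_Ioi
  intro x _
  exact (key_subst β z x).symm

lemma f_hasDerivAt (β : ℝ) {z : ℂ} (hz : 0 < z.re) {t : ℝ} (ht : 1 < t) :
    HasDerivAt (f β z) (fd β z t) t := by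
  have ht0 : (0:ℝ) < t := by linarith
  have hlog : 0 < Real.log t := Real.log_pos ht
  have h1 : HasDerivAt (fun t : ℝ => ((Real.log t ^ β : ℝ) : ℂ))
      ((t⁻¹ * β * Real.log t ^ (β - 1) : ℝ) : ℂ) t :=
    ((Real.hasDerivAt_log ht0.ne').rpow_const (Or.inl hlog.ne')).ofReal_comp
  have hw : -(1 + z) ≠ 0 := by
    intro h
    have := congrArg Complex.re h
    simp only [Complex.neg_re, Complex.add_re, Complex.one_re, Complex.zero_re] at this
    linarith
  have h2' := hasDerivAt_ofReal_cpow_const' ht0.ne' (r := -(1 + z) - 1)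
    (by
      intro h
      apply hw
      have : -(1 + z) = (-1 : ℂ) + 1 := by rw [← h]; ring
      simpa using this)
  rw [sub_add_cancel] at h2'
  have h2 : HasDerivAt (fun y : ℝ => (y : ℂ) ^ (-(1 + z)))
      (-(1 + z) * (t : ℂ) ^ (-(1 + z) - 1)) t := by
    have := h2'.const_mul (-(1 + z))
    have heq : (fun y : ℝ => -(1 + z) * ((y : ℂ) ^ (-(1 + z)) / -(1 + z)))
        = fun y : ℝ => (y : ℂ) ^ (-(1 + z)) := by
      funext y
      rw [mul_div_assoc']
      exact mul_div_cancel_left₀ _ hw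
    rwa [heq] at this
  exact h1.mul h2

lemma logpow_bound (p : ℝ) (k : ℕ) {t : ℝ} (ht : t ∈ Icc ((k : ℝ) + 2) ((k : ℝ) + 3)) :
    Real.log t ^ p ≤ 2 ^ |p| * Real.log ((k : ℝ) + 2) ^ p := by
  have hk2 : (2:ℝ) ≤ (k : ℝ) + 2 := by
    have : (0:ℝ) ≤ (k:ℝ) := Nat.cast_nonneg k
    linarith
  have hL : 0 < Real.log ((k : ℝ) + 2) := Real.log_pos (by linarith)
  have hlt : 1 < t := by
    have := ht.1; linarith
  have hLt : 0 < Real.log t := Real.log_pos hlt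
  have hlow : Real.log ((k : ℝ) + 2) ≤ Real.log t :=
    Real.log_le_log (by linarith) ht.1
  have hup : Real.log t ≤ 2 * Real.log ((k : ℝ) + 2) := by
    have h1 : Real.log t ≤ Real.log (((k : ℝ) + 2) ^ 2) := by
      apply Real.log_le_log (by linarith)
      have hk0 : (0:ℝ) ≤ (k:ℝ) := Nat.cast_nonneg k
      nlinarith [ht.2]
    rwa [Real.log_pow, Nat.cast_ofNat] at h1
  rcases le_or_gt 0 p with hp | hp
  · calc Real.log t ^ p ≤ (2 * Real.log ((k : ℝ) + 2)) ^ p :=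
          Real.rpow_le_rpow hLt.le hup hp
    _ = 2 ^ p * Real.log ((k : ℝ) + 2) ^ p := Real.mul_rpow (by norm_num) hL.le
    _ ≤ 2 ^ |p| * Real.log ((k : ℝ) + 2) ^ p :=
        mul_le_mul_of_nonneg_right
          (Real.rpow_le_rpow_of_exponent_le one_le_two (le_abs_self p))
          (Real.rpow_nonneg hL.le p)
  · calc Real.log t ^ p ≤ Real.log ((k : ℝ) + 2) ^ p :=
          Real.rpow_le_rpow_of_nonpos hL hlow hp.le
    _ ≤ 2 ^ |p| * Real.log ((k : ℝ) + 2) ^ p := by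
        nth_rewrite 1 [← one_mul (Real.log ((k : ℝ) + 2) ^ p)]
        exact mul_le_mul_of_nonneg_right
          (Real.one_le_rpow one_le_two (abs_nonneg p)) (Real.rpow_nonneg hL.le p)

lemma fd_bound {β : ℝ} {z : ℂ} (hz : 0 < z.re) (hz1 : ‖z‖ ≤ 1) (k : ℕ) {t : ℝ}
    (ht : t ∈ Icc ((k : ℝ) + 2) ((k : ℝ) + 3)) :
    ‖fd β z t‖ ≤ D β k := by
  have hk0 : (0:ℝ) ≤ (k:ℝ) := Nat.cast_nonneg k
  have hk : (0:ℝ) < (k : ℝ) + 2 := by linarith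
  have ht2 : (2:ℝ) ≤ t := le_trans (by linarith) ht.1
  have ht0 : (0:ℝ) < t := by linarith
  have ht1 : (1:ℝ) ≤ t := by linarith
  have hLt : 0 < Real.log t := Real.log_pos (by linarith)
  have hL : 0 < Real.log ((k : ℝ) + 2) := Real.log_pos (by linarith)
  have htk : (t:ℝ)⁻¹ ≤ ((k:ℝ) + 2)⁻¹ := by
    apply inv_anti₀ hk ht.1
  -- norms of the cpow factors
  have hc1 : ‖(t : ℂ) ^ (-(1 + z))‖ ≤ t⁻¹ := by
    rw [Complex.norm_cpow_eq_rpow_re_of_pos ht0]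
    rw [show (-(1 + z)).re = -(1 + z.re) by simp]
    calc t ^ (-(1 + z.re)) ≤ t ^ (-1 : ℝ) :=
          Real.rpow_le_rpow_of_exponent_le ht1 (by linarith)
    _ = t⁻¹ := Real.rpow_neg_one t
  have hc2 : ‖(t : ℂ) ^ (-(1 + z) - 1)‖ ≤ t⁻¹ * t⁻¹ := by
    rw [Complex.norm_cpow_eq_rpow_re_of_pos ht0]
    rw [show (-(1 + z) - 1).re = -(1 + z.re) - 1 by simp]
    calc t ^ (-(1 + z.re) - 1) ≤ t ^ (-2 : ℝ) :=
          Real.rpow_le_rpow_of_exponent_le ht1 (by linarith)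
    _ = t⁻¹ * t⁻¹ := by
        rw [show (-2 : ℝ) = (-1) + (-1) by norm_num, Real.rpow_add ht0,
          Real.rpow_neg_one]
  have hwn : ‖-(1 + z)‖ ≤ 2 := by
    rw [norm_neg]
    calc ‖(1:ℂ) + z‖ ≤ ‖(1:ℂ)‖ + ‖z‖ := norm_add_le _ _
    _ ≤ 2 := by rw [norm_one]; linarith
  have hb1 : Real.log t ^ (β - 1) ≤ 2 ^ |β - 1| * Real.log ((k : ℝ) + 2) ^ (β - 1) :=
    logpow_bound (β - 1) k ht
  have hb2 : Real.log t ^ β ≤ 2 ^ |β| * Real.log ((k : ℝ) + 2) ^ β :=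
    logpow_bound β k ht
  have htsq : t⁻¹ * t⁻¹ ≤ (((k:ℝ) + 2) ^ 2)⁻¹ := by
    rw [sq, mul_inv]
    exact mul_le_mul htk htk (by positivity) (by positivity)
  unfold fd
  refine le_trans (norm_add_le _ _) ?_
  have h1 : ‖((t⁻¹ * β * Real.log t ^ (β - 1) : ℝ) : ℂ) * (t : ℂ) ^ (-(1 + z))‖
      ≤ (|β| * 2 ^ |β - 1| * Real.log ((k : ℝ) + 2) ^ (β - 1)) / ((k : ℝ) + 2) ^ 2 := by
    rw [norm_mul, Complex.norm_real, Real.norm_eq_abs, abs_mul, abs_mul,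
      abs_of_nonneg (inv_nonneg.mpr ht0.le),
      abs_of_nonneg (Real.rpow_nonneg hLt.le (β - 1))]
    calc t⁻¹ * |β| * Real.log t ^ (β - 1) * ‖(t : ℂ) ^ (-(1 + z))‖
        ≤ t⁻¹ * |β| * Real.log t ^ (β - 1) * t⁻¹ := by
          apply mul_le_mul_of_nonneg_left hc1
          positivity
    _ = |β| * Real.log t ^ (β - 1) * (t⁻¹ * t⁻¹) := by ring
    _ ≤ |β| * (2 ^ |β - 1| * Real.log ((k : ℝ) + 2) ^ (β - 1)) * (((k:ℝ) + 2) ^ 2)⁻¹ := by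
          apply mul_le_mul
          · apply mul_le_mul_of_nonneg_left hb1 (abs_nonneg β)
          · exact htsq
          · positivity
          · positivity
    _ = (|β| * 2 ^ |β - 1| * Real.log ((k : ℝ) + 2) ^ (β - 1)) / ((k : ℝ) + 2) ^ 2 := by
          rw [div_eq_mul_inv]; ring
  have h2 : ‖((Real.log t ^ β : ℝ) : ℂ) * (-(1 + z) * (t : ℂ) ^ (-(1 + z) - 1))‖
      ≤ (2 * 2 ^ |β| * Real.log ((k : ℝ) + 2) ^ β) / ((k : ℝ) + 2) ^ 2 := by
    rw [norm_mul, norm_mul, Complex.norm_real, Real.norm_eq_abs,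
      abs_of_nonneg (Real.rpow_nonneg hLt.le β)]
    calc Real.log t ^ β * (‖-(1 + z)‖ * ‖(t : ℂ) ^ (-(1 + z) - 1)‖)
        ≤ Real.log t ^ β * (2 * (t⁻¹ * t⁻¹)) := by
          apply mul_le_mul_of_nonneg_left _ (Real.rpow_nonneg hLt.le β)
          exact mul_le_mul hwn hc2 (norm_nonneg _) (by norm_num)
    _ ≤ (2 ^ |β| * Real.log ((k : ℝ) + 2) ^ β) * (2 * (((k:ℝ) + 2) ^ 2)⁻¹) := by
          apply mul_le_mul hb2 _ (by positivity) (by positivity)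
          exact mul_le_mul_of_nonneg_left htsq (by norm_num)
    _ = (2 * 2 ^ |β| * Real.log ((k : ℝ) + 2) ^ β) / ((k : ℝ) + 2) ^ 2 := by
          rw [div_eq_mul_inv]; ring
  calc _ ≤ _ := add_le_add h1 h2
  _ = D β k := by rw [D, ← add_div]

lemma D_nonneg (β : ℝ) (k : ℕ) : 0 ≤ D β k := by
  have hL : 0 < Real.log ((k : ℝ) + 2) := Real.log_pos (by
    have : (0:ℝ) ≤ k := Nat.cast_nonneg k
    linarith)
  unfold D
  have h1 : (0:ℝ) ≤ |β| * 2 ^ |β - 1| * Real.log ((k : ℝ) + 2) ^ (β - 1) := by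
    apply mul_nonneg (mul_nonneg (abs_nonneg β) (Real.rpow_nonneg (by norm_num) _))
    exact Real.rpow_nonneg hL.le _
  have h2 : (0:ℝ) ≤ 2 * 2 ^ |β| * Real.log ((k : ℝ) + 2) ^ β := by
    apply mul_nonneg (mul_nonneg (by norm_num) (Real.rpow_nonneg (by norm_num) _))
    exact Real.rpow_nonneg hL.le _
  positivity

lemma sumlog (p : ℝ) {r : ℝ} (hr : 1 < r) :
    Summable (fun k : ℕ => Real.log ((k : ℝ) + 2) ^ p / ((k : ℝ) + 2) ^ r) := by
  set ε : ℝ := (r - 1) / 2 with hε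
  have hε0 : 0 < ε := by rw [hε]; linarith
  have htend : Tendsto (fun k : ℕ => (k : ℝ) + 2) atTop atTop :=
    tendsto_atTop_add_const_right _ 2 tendsto_natCast_atTop_atTop
  have h1 : (fun k : ℕ => Real.log ((k : ℝ) + 2) ^ p)
      =O[atTop] fun k : ℕ => ((k : ℝ) + 2) ^ ε :=
    ((isLittleO_log_rpow_rpow_atTop p hε0).comp_tendsto htend).isBigO
  have h2 : (fun k : ℕ => Real.log ((k : ℝ) + 2) ^ p / ((k : ℝ) + 2) ^ r)
      =O[atTop] fun k : ℕ => ((k : ℝ) + 2) ^ (ε - r) := by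
    have h3 := h1.mul (Asymptotics.isBigO_refl (fun k : ℕ => (((k : ℝ) + 2) ^ r)⁻¹) atTop)
    refine (Asymptotics.isBigO_congr ?_ ?_).mp h3
    · filter_upwards with k
      rw [div_eq_mul_inv]
    · filter_upwards with k
      have hk : (0:ℝ) < (k : ℝ) + 2 := by positivity
      rw [← Real.rpow_neg hk.le, ← Real.rpow_add hk]
      ring_nf
  apply summable_of_isBigO_nat _ h2
  have hs : ε - r < -1 := by rw [hε]; linarith
  have : Summable (fun n : ℕ => ((n : ℝ)) ^ (ε - r)) := Real.summable_nat_rpow.mpr hs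
  have h4 := this.comp_injective (add_left_injective 2)
  refine h4.congr fun k => ?_
  simp only [Function.comp_apply]
  push_cast
  ring_nf

lemma summable_D (β : ℝ) : Summable (D β) := by
  unfold D
  have h2 : ∀ k : ℕ, ((k:ℝ) + 2) ^ (2:ℝ) = ((k:ℝ) + 2) ^ (2:ℕ) := fun k => by
    rw [← Real.rpow_natCast]; norm_num
  have ha := ((sumlog (β - 1) (by norm_num : (1:ℝ) < 2)).mul_left (|β| * 2 ^ |β - 1|))
  have hb := ((sumlog β (by norm_num : (1:ℝ) < 2)).mul_left (2 * 2 ^ |β|))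
  refine (ha.add hb).congr fun k => ?_
  have hc : ((k:ℝ) + 2) ^ (2:ℕ) ≠ 0 := by positivity
  rw [h2 k, mul_div_assoc', mul_div_assoc', ← add_div]

lemma union_Ioc : (⋃ k : ℕ, Ioc ((k : ℝ) + 2) ((k : ℝ) + 3)) = Ioi (2 : ℝ) := by
  ext x
  simp only [mem_iUnion, mem_Ioc, mem_Ioi]
  constructor
  · rintro ⟨k, hk, -⟩
    have : (0:ℝ) ≤ k := Nat.cast_nonneg k
    linarith
  · intro hx
    rcases le_or_gt x 3 with h3 | h3
    · exact ⟨0, by norm_num [hx], by norm_num [h3]⟩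
    · have hy : (0:ℝ) ≤ x - 3 := by linarith
      refine ⟨⌈x - 3⌉₊, ?_, ?_⟩
      · have := Nat.ceil_lt_add_one hy
        linarith
      · have := Nat.le_ceil (x - 3)
        linarith

lemma summable_f {β : ℝ} {z : ℂ} (hz : 0 < z.re) :
    Summable (fun k : ℕ => f β z ((k : ℝ) + 2)) := by
  apply Summable.of_norm
  have hnorm : ∀ k : ℕ, ‖f β z ((k : ℝ) + 2)‖
      = Real.log ((k : ℝ) + 2) ^ β / ((k : ℝ) + 2) ^ (1 + z.re) := by
    intro k
    have hk : (0:ℝ) < (k : ℝ) + 2 := by positivity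
    have hL : 0 < Real.log ((k : ℝ) + 2) := Real.log_pos (by
      have : (0:ℝ) ≤ (k:ℝ) := Nat.cast_nonneg k
      linarith)
    unfold f
    rw [norm_mul, 
      Complex.norm_cpow_eq_rpow_re_of_pos hk]
    simp only [Complex.norm_real, Real.norm_eq_abs,
      abs_of_nonneg (Real.rpow_nonneg hL.le β)]
    rw [show (-(1 + z)).re = -(1 + z.re) by simp, Real.rpow_neg hk.le, div_eq_mul_inv]
  refine Summable.congr (sumlog β (by linarith : (1:ℝ) < 1 + z.re)) fun k => (hnorm k).symm

lemma term_bound {β : ℝ} {z : ℂ} (hz : 0 < z.re) (hz1 : ‖z‖ ≤ 1) (k : ℕ) :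
    ‖f β z ((k : ℝ) + 2) - ∫ t in Ioc ((k : ℝ) + 2) ((k : ℝ) + 3), f β z t‖ ≤ D β k := by
  have hk0 : (0:ℝ) ≤ (k:ℝ) := Nat.cast_nonneg k
  set a := (k : ℝ) + 2 with ha
  set b := (k : ℝ) + 3 with hb
  have hab : a ≤ b := by rw [ha, hb]; linarith
  have hmem : ∀ t ∈ Icc a b, 1 < t := by
    intro t htt
    have := htt.1
    rw [ha] at this
    linarith
  have hcont : ContinuousOn (f β z) (Icc a b) := fun t htt =>
    ((f_hasDerivAt β hz (hmem t htt)).continuousAt).continuousWithinAt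
  have hint : IntegrableOn (f β z) (Ioc a b) :=
    (hcont.integrableOn_Icc).mono_set Ioc_subset_Icc_self
  have hvol : volume (Ioc a b) = 1 := by
    rw [Real.volume_Ioc, ha, hb]
    norm_num
  have hvollt : volume (Ioc a b) < ⊤ := by rw [hvol]; exact ENNReal.one_lt_top
  have hconstint : IntegrableOn (fun _ : ℝ => f β z a) (Ioc a b) :=
    integrableOn_const hvollt.ne
  have hconst : ∫ _ in Ioc a b, f β z a = f β z a := by
    rw [setIntegral_const]
    simp [Measure.real, hvol]
  have hbound : ∀ t ∈ Ioc a b, ‖f β z a - f β z t‖ ≤ D β k := by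
    intro t htt
    have htIcc : t ∈ Icc a b := Ioc_subset_Icc_self htt
    have h1 : ‖f β z t - f β z a‖ ≤ D β k * ‖t - a‖ :=
      Convex.norm_image_sub_le_of_norm_hasDerivWithin_le
        (fun s hs => (f_hasDerivAt β hz (hmem s hs)).hasDerivWithinAt)
        (fun s hs => fd_bound hz hz1 k hs) (convex_Icc a b)
        (left_mem_Icc.mpr hab) htIcc
    rw [norm_sub_rev]
    refine h1.trans ?_
    have hta : ‖t - a‖ ≤ 1 := by
      rw [Real.norm_eq_abs, abs_of_nonneg (by linarith [htt.1.le])]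
      have := htIcc.2
      rw [hb] at this
      rw [ha]
      linarith
    calc D β k * ‖t - a‖ ≤ D β k * 1 := mul_le_mul_of_nonneg_left hta (D_nonneg β k)
    _ = D β k := mul_one _
  calc ‖f β z a - ∫ t in Ioc a b, f β z t‖
      = ‖∫ t in Ioc a b, (f β z a - f β z t)‖ := by
        rw [integral_sub hconstint hint, hconst]
    _ ≤ D β k * (volume (Ioc a b)).toReal :=
        norm_setIntegral_le_of_norm_le_const hvollt hbound
    _ = D β k := by rw [hvol]; simp

lemma pairwise_disjoint_Ioc :
    Pairwise (Function.onFun Disjoint fun k : ℕ => Ioc ((k : ℝ) + 2) ((k : ℝ) + 3)) := by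
  intro i j hij
  apply Set.Ioc_disjoint_Ioc.mpr
  rcases hij.lt_or_gt with h | h
  · have hij' : (i:ℝ) + 1 ≤ (j:ℝ) := by exact_mod_cast Nat.succ_le_of_lt h
    calc min ((i:ℝ)+3) ((j:ℝ)+3) ≤ (i:ℝ)+3 := min_le_left _ _
    _ ≤ (j:ℝ)+2 := by linarith
    _ ≤ max ((i:ℝ)+2) ((j:ℝ)+2) := le_max_right _ _
  · have hij' : (j:ℝ) + 1 ≤ (i:ℝ) := by exact_mod_cast Nat.succ_le_of_lt h
    calc min ((i:ℝ)+3) ((j:ℝ)+3) ≤ (j:ℝ)+3 := min_le_right _ _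
    _ ≤ (i:ℝ)+2 := by linarith
    _ ≤ max ((i:ℝ)+2) ((j:ℝ)+2) := le_max_left _ _

lemma main_est {β : ℝ} (hβ : -1 < β) {z : ℂ} (hz : 0 < z.re) (hz1 : ‖z‖ ≤ 1) :
    ‖z ^ ((1 + β : ℝ) : ℂ) *
        (∑' k : ℕ, ((Real.log (k + 2) ^ β : ℝ) : ℂ) / ((k + 2 : ℕ) : ℂ) ^ (1 + z)) -
      ((Real.Gamma (1 + β) : ℝ) : ℂ)‖
    ≤ ‖z‖ ^ (1 + β) *
        ((∑' k, D β k) + ∫ u in Ioc (0 : ℝ) (Real.log 2), u ^ β) := by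
  have hz0 : z ≠ 0 := by
    intro h
    rw [h] at hz
    simp at hz
  set c : ℂ := ((1 + β : ℝ) : ℂ) with hc
  set Γc : ℂ := ((Real.Gamma (1 + β) : ℝ) : ℂ) with hΓc
  set T : ℝ := ∑' k, D β k with hT
  set C₀ : ℝ := ∫ u in Ioc (0 : ℝ) (Real.log 2), u ^ β with hC₀
  set S : ℂ := ∑' k : ℕ, f β z ((k : ℝ) + 2) with hS
  set R : ℂ := ∫ u in Ioc (0 : ℝ) (Real.log 2), g β z u with hR
  set I2 : ℂ := ∫ t in Ioi (2 : ℝ), f β z t with hI2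
  have hlog2 : (0:ℝ) ≤ Real.log 2 := Real.log_nonneg one_le_two
  -- the tsum in the statement is S
  have hSeq : (∑' k : ℕ, ((Real.log (k + 2) ^ β : ℝ) : ℂ) / ((k + 2 : ℕ) : ℂ) ^ (1 + z)) = S := by
    rw [hS]
    apply tsum_congr
    intro k
    have hcast : (((k + 2 : ℕ)) : ℂ) = ((((k:ℝ) + 2) : ℝ) : ℂ) := by push_cast; ring
    rw [hcast]
    unfold f
    rw [Complex.cpow_neg, div_eq_mul_inv]
  -- sum of integrals over Ioc pieces
  have hintf : IntegrableOn (f β z) (Ioi (2:ℝ)) := integrableOn_f_Ioi2 hβ hz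
  have hhs : HasSum (fun k : ℕ => ∫ t in Ioc ((k:ℝ) + 2) ((k:ℝ) + 3), f β z t) I2 := by
    rw [hI2, ← union_Ioc]
    exact hasSum_integral_iUnion (fun k => measurableSet_Ioc) pairwise_disjoint_Ioc
      (union_Ioc ▸ hintf)
  have hsumf : Summable (fun k : ℕ => f β z ((k : ℝ) + 2)) := summable_f hz
  -- error term
  have hE : S - I2 = ∑' k : ℕ,
      (f β z ((k : ℝ) + 2) - ∫ t in Ioc ((k:ℝ) + 2) ((k:ℝ) + 3), f β z t) := by
    rw [Summable.tsum_sub hsumf hhs.summable, hS, hhs.tsum_eq]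
  have hsumnorm : Summable (fun k : ℕ =>
      ‖f β z ((k : ℝ) + 2) - ∫ t in Ioc ((k:ℝ) + 2) ((k:ℝ) + 3), f β z t‖) :=
    Summable.of_nonneg_of_le (fun k => norm_nonneg _) (fun k => term_bound hz hz1 k)
      (summable_D β)
  have hEbound : ‖S - I2‖ ≤ T := by
    rw [hE]
    refine le_trans (norm_tsum_le_tsum_norm hsumnorm) ?_
    exact Summable.tsum_le_tsum (fun k => term_bound hz hz1 k) hsumnorm (summable_D β)
  -- the integral over Ioi 2 in terms of Gamma
  have hgIoc : IntegrableOn (g β z) (Ioc (0:ℝ) (Real.log 2)) :=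
    (g_integrableOn hβ hz).mono_set Ioc_subset_Ioi_self
  have hgIoi : IntegrableOn (g β z) (Ioi (Real.log 2)) :=
    (g_integrableOn hβ hz).mono_set (Ioi_subset_Ioi hlog2)
  have hsplit : (∫ u in Ioi (0:ℝ), g β z u) = R + ∫ u in Ioi (Real.log 2), g β z u := by
    rw [hR, ← setIntegral_union (Ioc_disjoint_Ioi le_rfl) measurableSet_Ioi hgIoc hgIoi,
      Ioc_union_Ioi_eq_Ioi hlog2]
  have hI2eq : I2 = Γc * z ^ (-c) - R := by
    rw [hI2, integral_f_Ioi2 β z]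
    have := J_eq hβ hz
    rw [hsplit] at this
    rw [hc, hΓc]
    linear_combination this
  -- bound on R
  have hRbound : ‖R‖ ≤ C₀ := by
    rw [hR, hC₀]
    refine le_trans (norm_integral_le_integral_norm _) ?_
    apply setIntegral_mono_on hgIoc.norm
      ((intervalIntegrable_iff_integrableOn_Ioc_of_le hlog2).mp
        (intervalIntegral.intervalIntegrable_rpow' hβ)) measurableSet_Ioc
    intro u hu
    have hu0 : (0:ℝ) < u := hu.1
    unfold g
    rw [norm_mul, Complex.norm_exp]
    simp only [Complex.norm_real, Real.norm_eq_abs, abs_of_nonneg (Real.rpow_nonneg hu0.le β)]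
    have hre : (-(z * (u:ℂ))).re = -(z.re * u) := by simp [Complex.mul_re]
    rw [hre]
    calc u ^ β * Real.exp (-(z.re * u)) ≤ u ^ β * 1 := by
          apply mul_le_mul_of_nonneg_left _ (Real.rpow_nonneg hu0.le β)
          apply Real.exp_le_one_iff.mpr
          have : 0 ≤ z.re * u := mul_nonneg hz.le hu0.le
          linarith
    _ = u ^ β := mul_one _
  -- cpow cancellation
  have hzc_ne : z ^ c ≠ 0 := by
    intro h
    exact hz0 ((Complex.cpow_eq_zero_iff z c).mp h).1
  have hcc : z ^ c * z ^ (-c) = 1 := by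
    rw [Complex.cpow_neg]
    exact mul_inv_cancel₀ hzc_ne
  -- final algebra
  have hfinal : z ^ c * S - Γc = z ^ c * ((S - I2) - R) := by
    have : z ^ c * S - Γc
        = z ^ c * ((S - I2) - R) + Γc * (z ^ c * z ^ (-c) - 1) := by
      rw [hI2eq]; ring
    rw [this, hcc]
    ring
  rw [hSeq, hfinal, norm_mul]
  have habs : ‖z ^ c‖ = ‖z‖ ^ (1 + β) := by
    rw [Complex.norm_cpow_of_ne_zero hz0]
    simp [hc]
  rw [habs]
  apply mul_le_mul_of_nonneg_left _ (Real.rpow_nonneg (norm_nonneg z) _)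
  calc ‖(S - I2) - R‖ ≤ ‖S - I2‖ + ‖R‖ := norm_sub_le _ _
  _ ≤ T + C₀ := add_le_add hEbound hRbound

end Stmt0Aux

open Stmt0Aux

/-- For every fixed `β > -1`, as `z → 0` within the right half-plane `{Re z > 0}`,
`z^(1+β) * ∑_{k ≥ 2} (log k)^β / k^(1+z)` tends to `Γ(1+β)`. -/
theorem stmt0 (β : ℝ) (hβ : -1 < β) :
    Tendsto (fun z : ℂ =>
        z ^ ((1 + β : ℝ) : ℂ) *
          ∑' k : ℕ, ((Real.log (k + 2) ^ β : ℝ) : ℂ) / ((k + 2 : ℕ) : ℂ) ^ (1 + z))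
      (nhdsWithin 0 {z : ℂ | 0 < z.re})
      (nhds ((Real.Gamma (1 + β) : ℝ) : ℂ)) := by
  set T : ℝ := ∑' k, D β k with hT
  set C₀ : ℝ := ∫ u in Ioc (0 : ℝ) (Real.log 2), u ^ β with hC₀
  rw [← tendsto_sub_nhds_zero_iff]
  apply squeeze_zero_norm'
    (a := fun z : ℂ => ‖z‖ ^ (1 + β) * (T + C₀))
  · have hU : ∀ᶠ z : ℂ in nhdsWithin 0 {z : ℂ | 0 < z.re}, z ∈ {z : ℂ | 0 < z.re} :=
      self_mem_nhdsWithin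
    have hball : ∀ᶠ z : ℂ in nhdsWithin 0 {z : ℂ | 0 < z.re}, ‖z‖ ≤ 1 := by
      apply Filter.Eventually.filter_mono nhdsWithin_le_nhds
      have h := Metric.eventually_nhds_iff.mpr
        (⟨1, one_pos, fun {y} hy => le_of_lt (by simpa [dist_eq_norm] using hy)⟩ :
          ∃ ε > 0, ∀ {y : ℂ}, dist y 0 < ε → ‖y‖ ≤ 1)
      exact h
    filter_upwards [hU, hball] with z hzU hz1
    exact main_est hβ hzU hz1
  · have h1 : Tendsto (fun z : ℂ => ‖z‖) (nhdsWithin 0 {z : ℂ | 0 < z.re}) (nhds 0) := by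
      have := (continuous_norm.tendsto (0:ℂ)).mono_left
        (nhdsWithin_le_nhds (s := {z : ℂ | 0 < z.re}))
      simpa using this
    have h2 : Tendsto (fun x : ℝ => x ^ (1 + β) * (T + C₀)) (nhds 0) (nhds 0) := by
      have h3 := (Real.continuousAt_rpow_const 0 (1 + β) (Or.inr (by linarith))).tendsto
      rw [Real.zero_rpow (by linarith : (1:ℝ) + β ≠ 0)] at h3
      have h4 := h3.mul_const (T + C₀)
      simpa using h4
    exact h2.comp h1
end

section
/- Let (η_k)_{k≥1} be i.i.d. real random variables with E η = 0, E η² = 1, and α > -1/2. With κ_α a constant depending only on α, for every ρ > 0, lim_{s→0+} (s^{1+2α}/log log(1/s))^{1/2} Σ_{k≥⌊1/s⌋+1} k^{-1/2-s} (log k)^α E[|η_k| 1_{A_{k,ρ}(s)}] = 0, where A_{k,ρ}(s) = {|η_k| > ρ (log k)^{-α} (log 1/s)^{-1} (k^{1+s}/(s^{1+2α} log log 1/s))^{1/2}}. -/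
open MeasureTheory ProbabilityTheory Filter Real

private lemma aux_sum_sqrt (n : ℕ) :
    ∑ k ∈ Finset.range (n+1), ((k:ℝ)) ^ (-(1/2) : ℝ) ≤ 2 * Real.sqrt n := by
  induction n with
  | zero => simp [Real.zero_rpow]
  | succ n ih =>
    rw [Finset.sum_range_succ]
    have hb : (0:ℝ) < Real.sqrt (n+1) := Real.sqrt_pos.2 (by positivity)
    have ha : Real.sqrt (n:ℝ) ≤ Real.sqrt ((n:ℝ)+1) := Real.sqrt_le_sqrt (by linarith)
    have hsq : Real.sqrt ((n:ℝ)+1) ^ 2 = (n:ℝ)+1 := Real.sq_sqrt (by positivity)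
    have hsq2 : Real.sqrt (n:ℝ) ^ 2 = (n:ℝ) := Real.sq_sqrt (by positivity)
    have h1 : ((n+1:ℕ):ℝ) ^ (-(1/2):ℝ) = (Real.sqrt ((n:ℝ)+1))⁻¹ := by
      rw [Real.rpow_neg (by positivity), Real.sqrt_eq_rpow]
      push_cast
      ring_nf
    have key : ((n+1:ℕ):ℝ) ^ (-(1/2):ℝ) ≤ 2*(Real.sqrt ((n:ℝ)+1) - Real.sqrt n) := by
      rw [h1, inv_le_iff_one_le_mul₀ hb]
      nlinarith [Real.sqrt_nonneg (n:ℝ)]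
    push_cast at key ih ⊢
    linarith

private lemma aux_exp_bound (α : ℝ) {s u : ℝ} (hs : 0 < s) (hu : 1 ≤ u) :
    u ^ α * Real.exp (-(s*u)/2) ≤ max 1 ((2 * max α 0 / s) ^ (max α 0)) := by
  set β := max α 0 with hβ
  have hβ0 : 0 ≤ β := le_max_right _ _
  have h1 : u ^ α ≤ u ^ β := Real.rpow_le_rpow_of_exponent_le hu (le_max_left _ _)
  have hexp : Real.exp (-(s*u)/2) ≤ 1 := by
    rw [Real.exp_le_one_iff]
    nlinarith
  have hu0 : (0:ℝ) < u := by linarith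
  rcases le_or_gt α 0 with hα | hα
  · have : β = 0 := by simp [hβ, hα]
    rw [this] at h1
    rw [Real.rpow_zero] at h1
    calc u ^ α * Real.exp (-(s*u)/2) ≤ 1 * 1 := by
          apply mul_le_mul (h1) hexp (Real.exp_nonneg _) zero_le_one
      _ = 1 := by ring
      _ ≤ _ := le_max_left _ _
  · have hβα : β = α := max_eq_left hα.le
    have hb : (0:ℝ) < 2 * β / s := by rw [hβα]; positivity
    have main : u ^ β * Real.exp (-(s*u)/2) ≤ (2 * β / s) ^ β := by
      rw [Real.rpow_def_of_pos hu0, Real.rpow_def_of_pos hb, ← Real.exp_add]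
      apply Real.exp_le_exp.2
      have hx : 0 < s * u / (2 * β) := by rw [hβα]; positivity
      have hlog := Real.log_le_sub_one_of_pos hx
      have hlogeq : Real.log (s * u / (2*β)) = Real.log u - Real.log (2*β/s) := by
        rw [← Real.log_div (by positivity) (by positivity)]
        congr 1
        field_simp
      have hβpos : 0 < β := by rw [hβα]; exact hα
      have h2 : β * (Real.log u - Real.log (2*β/s)) ≤ s*u/2 - β := by
        rw [← hlogeq]
        calc β * Real.log (s*u/(2*β)) ≤ β * (s*u/(2*β) - 1) :=
              mul_le_mul_of_nonneg_left hlog hβ0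
          _ = s*u/2 - β := by field_simp
      nlinarith [h2, hβpos]
    calc u ^ α * Real.exp (-(s*u)/2) ≤ u ^ β * Real.exp (-(s*u)/2) :=
          mul_le_mul_of_nonneg_right h1 (Real.exp_nonneg _)
      _ ≤ (2*β/s) ^ β := main
      _ ≤ _ := le_max_right _ _

private lemma aux_s_facts {s : ℝ} (hs : 0 < s) (hs' : s < Real.exp (-Real.exp 1)) :
    1 < Real.log (1/s) ∧ 1 ≤ Real.log (Real.log (1/s)) := by
  have h1s : Real.exp (Real.exp 1) < 1/s := by
    rw [one_div]
    rw [Real.exp_neg] at hs'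
    calc Real.exp (Real.exp 1) = ((Real.exp (Real.exp 1))⁻¹)⁻¹ := by rw [inv_inv]
      _ < s⁻¹ := by gcongr
  have hLgt : Real.exp 1 < Real.log (1/s) := by
    calc Real.exp 1 = Real.log (Real.exp (Real.exp 1)) := (Real.log_exp _).symm
      _ < Real.log (1/s) := Real.log_lt_log (Real.exp_pos _) h1s
  constructor
  · nlinarith [Real.add_one_le_exp (1:ℝ)]
  · calc (1:ℝ) = Real.log (Real.exp 1) := (Real.log_exp _).symm
      _ ≤ Real.log (Real.log (1/s)) := Real.log_le_log (Real.exp_pos _) hLgt.le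

private lemma aux_filter_sum (α : ℝ) {s ρ z : ℝ} (hρ : 0 < ρ) (hs : 0 < s)
    (hs' : s < Real.exp (-Real.exp 1)) (hz : 0 ≤ z) (S : Finset ℕ)
    (hS : ∀ k ∈ S, ⌊1/s⌋₊ + 1 ≤ k ∧
      ρ * (Real.log k ^ α)⁻¹ * (Real.log (1/s))⁻¹ *
        Real.sqrt ((k:ℝ)^(1+s) / (s^(1+2*α) * Real.log (Real.log (1/s)))) < z) :
    ∑ k ∈ S, (k:ℝ)^(-(1/2:ℝ)-s) * Real.log (k:ℕ) ^ α
      ≤ 2 * (ρ⁻¹ * Real.log (1/s) * Real.sqrt (s^(1+2*α) * Real.log (Real.log (1/s)))) *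
        (max 1 ((2 * max α 0 / s) ^ (max α 0)))^2 * z := by
  set β := max α 0 with hβ
  set L := Real.log (1/s) with hL
  set M := Real.log L with hM
  set D := max 1 ((2 * β / s) ^ β) with hD
  set c := ρ⁻¹ * L * Real.sqrt (s^(1+2*α) * M) with hc
  have h1s : Real.exp (Real.exp 1) < 1/s := by
    rw [one_div]
    rw [Real.exp_neg] at hs'
    calc Real.exp (Real.exp 1) = ((Real.exp (Real.exp 1))⁻¹)⁻¹ := by rw [inv_inv]
      _ < s⁻¹ := by gcongr
  have hLgt : Real.exp 1 < L := by
    rw [hL]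
    calc Real.exp 1 = Real.log (Real.exp (Real.exp 1)) := (Real.log_exp _).symm
      _ < Real.log (1/s) := Real.log_lt_log (Real.exp_pos _) h1s
  have hL1 : 1 < L := lt_trans (by nlinarith [Real.add_one_le_exp (1:ℝ)]) hLgt
  have hM1 : 1 ≤ M := by
    rw [hM]
    calc (1:ℝ) = Real.log (Real.exp 1) := (Real.log_exp _).symm
      _ ≤ Real.log L := Real.log_le_log (Real.exp_pos _) hLgt.le
  have hD1 : 1 ≤ D := le_max_left _ _
  have hc0 : 0 ≤ c := by
    rw [hc]; positivity
  have hk1 : ∀ k ∈ S, 1 < Real.log (k:ℕ) ∧ (1:ℝ) < (k:ℝ) := by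
    intro k hk
    have h1 : (1:ℝ)/s < (k:ℝ) := by
      calc (1:ℝ)/s < ⌊1/s⌋₊ + 1 := Nat.lt_floor_add_one _
        _ ≤ (k:ℝ) := by exact_mod_cast Nat.cast_le.2 (hS k hk).1
    have h2 : Real.exp 1 < Real.log (k:ℕ) := by
      calc Real.exp 1 < L := hLgt
        _ < Real.log (k:ℝ) := Real.log_lt_log (by positivity) h1
    constructor
    · nlinarith [Real.add_one_le_exp (1:ℝ)]
    · calc (1:ℝ) < Real.exp (Real.exp 1) := by
            nlinarith [Real.add_one_le_exp (1:ℝ), Real.add_one_le_exp (Real.exp 1)]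
        _ < 1/s := h1s
        _ < (k:ℝ) := h1
  have step1 : ∀ k ∈ S, (k:ℝ)^(-(1/2:ℝ)-s) * Real.log (k:ℕ) ^ α ≤ D * (k:ℝ)^(-(1/2):ℝ) := by
    intro k hk
    obtain ⟨hlogk, hkgt⟩ := hk1 k hk
    have hk0 : (0:ℝ) < (k:ℝ) := by linarith
    have e1 : (k:ℝ)^(-(1/2:ℝ)-s) = (k:ℝ)^(-(1/2):ℝ) * (k:ℝ)^(-s) := by
      rw [← Real.rpow_add hk0]; ring_nf
    have e2 : (k:ℝ)^(-s) = Real.exp (-(s * Real.log (k:ℝ))) := by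
      rw [Real.rpow_def_of_pos hk0]; ring_nf
    have e3 : Real.exp (-(s * Real.log (k:ℝ))) ≤ Real.exp (-(s * Real.log (k:ℝ))/2) := by
      apply Real.exp_le_exp.2
      nlinarith [Real.log_nonneg hkgt.le]
    have e4 : Real.log (k:ℝ) ^ α * Real.exp (-(s * Real.log (k:ℝ))/2) ≤ D :=
      aux_exp_bound α hs hlogk.le
    calc (k:ℝ)^(-(1/2:ℝ)-s) * Real.log (k:ℕ) ^ α
        = (k:ℝ)^(-(1/2):ℝ) * ((k:ℝ)^(-s) * Real.log (k:ℝ) ^ α) := by rw [e1]; ring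
      _ ≤ (k:ℝ)^(-(1/2):ℝ) * D := by
          apply mul_le_mul_of_nonneg_left _ (Real.rpow_nonneg hk0.le _)
          calc (k:ℝ)^(-s) * Real.log (k:ℝ) ^ α
              = Real.log (k:ℝ) ^ α * Real.exp (-(s * Real.log (k:ℝ))) := by rw [e2]; ring
            _ ≤ Real.log (k:ℝ) ^ α * Real.exp (-(s * Real.log (k:ℝ))/2) := by
                apply mul_le_mul_of_nonneg_left e3 (Real.rpow_nonneg (by positivity) _)
            _ ≤ D := e4
      _ = D * (k:ℝ)^(-(1/2):ℝ) := by ring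
  rcases S.eq_empty_or_nonempty with hSe | hSne
  · rw [hSe]
    simp only [Finset.sum_empty]
    positivity
  · set K := S.max' hSne with hK
    have hKS : K ∈ S := S.max'_mem hSne
    obtain ⟨hlogK, hKgt⟩ := hk1 K hKS
    have hK0 : (0:ℝ) < (K:ℝ) := by linarith
    obtain ⟨hKk0, hKT⟩ := hS K hKS
    have hz0 : 0 < z := by
      refine lt_of_le_of_lt ?_ hKT
      positivity
    have step3 : Real.sqrt (K:ℝ) ≤ c * z * D := by
      have hsM : 0 < s^(1+2*α) * M := by positivity
      have hA : (0:ℝ) < Real.log (K:ℝ) ^ α := Real.rpow_pos_of_pos (by linarith) _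
      have hsqrt : Real.sqrt ((K:ℝ)^(1+s) / (s^(1+2*α) * M))
          = (K:ℝ)^((1+s)/2) / Real.sqrt (s^(1+2*α) * M) := by
        rw [Real.sqrt_div (by positivity), Real.sqrt_eq_rpow ((K:ℝ)^(1+s)),
          ← Real.rpow_mul hK0.le]
        ring_nf
      rw [hsqrt] at hKT
      have hKlt : (K:ℝ)^((1+s)/2) < z * (ρ⁻¹ * Real.log (K:ℝ) ^ α * L * Real.sqrt (s^(1+2*α)*M)) := by
        have hpos : (0:ℝ) < ρ⁻¹ * Real.log (K:ℝ) ^ α * L * Real.sqrt (s^(1+2*α)*M) := by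
          have : (0:ℝ) < Real.sqrt (s^(1+2*α)*M) := Real.sqrt_pos.2 hsM
          positivity
        have := mul_lt_mul_of_pos_right hKT hpos
        calc (K:ℝ)^((1+s)/2)
            = ρ * (Real.log (K:ℝ) ^ α)⁻¹ * L⁻¹ * ((K:ℝ)^((1+s)/2) / Real.sqrt (s^(1+2*α)*M)) *
              (ρ⁻¹ * Real.log (K:ℝ) ^ α * L * Real.sqrt (s^(1+2*α)*M)) := by
              have hs1 : Real.sqrt (s^(1+2*α)*M) ≠ 0 := by positivity
              have hL0 : L ≠ 0 := by linarith
              field_simp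
          _ < z * (ρ⁻¹ * Real.log (K:ℝ) ^ α * L * Real.sqrt (s^(1+2*α)*M)) := this
      have hKsplit : Real.sqrt (K:ℝ)
          = (K:ℝ)^((1+s)/2) * Real.exp (-(s * Real.log (K:ℝ))/2) := by
        rw [Real.sqrt_eq_rpow]
        have : Real.exp (-(s * Real.log (K:ℝ))/2) = (K:ℝ)^(-(s/2)) := by
          rw [Real.rpow_def_of_pos hK0]; ring_nf
        rw [this, ← Real.rpow_add hK0]
        ring_nf
      have hAe : Real.log (K:ℝ) ^ α * Real.exp (-(s * Real.log (K:ℝ))/2) ≤ D :=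
        aux_exp_bound α hs hlogK.le
      calc Real.sqrt (K:ℝ) = (K:ℝ)^((1+s)/2) * Real.exp (-(s * Real.log (K:ℝ))/2) := hKsplit
        _ ≤ z * (ρ⁻¹ * Real.log (K:ℝ) ^ α * L * Real.sqrt (s^(1+2*α)*M)) *
            Real.exp (-(s * Real.log (K:ℝ))/2) := by
            apply mul_le_mul_of_nonneg_right hKlt.le (Real.exp_nonneg _)
        _ = (z * (ρ⁻¹ * L * Real.sqrt (s^(1+2*α)*M))) *
            (Real.log (K:ℝ) ^ α * Real.exp (-(s * Real.log (K:ℝ))/2)) := by ring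
        _ ≤ (z * (ρ⁻¹ * L * Real.sqrt (s^(1+2*α)*M))) * D := by
            apply mul_le_mul_of_nonneg_left hAe
            positivity
        _ = c * z * D := by rw [hc]; ring
    have hsub : S ⊆ Finset.range (K+1) := by
      intro k hk
      rw [Finset.mem_range]
      exact Nat.lt_succ_of_le (S.le_max' k hk)
    calc ∑ k ∈ S, (k:ℝ)^(-(1/2:ℝ)-s) * Real.log (k:ℕ) ^ α
        ≤ ∑ k ∈ S, D * (k:ℝ)^(-(1/2):ℝ) := Finset.sum_le_sum step1
      _ = D * ∑ k ∈ S, (k:ℝ)^(-(1/2):ℝ) := by rw [Finset.mul_sum]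
      _ ≤ D * ∑ k ∈ Finset.range (K+1), (k:ℝ)^(-(1/2):ℝ) := by
          apply mul_le_mul_of_nonneg_left _ (by linarith : (0:ℝ) ≤ D)
          apply Finset.sum_le_sum_of_subset_of_nonneg hsub
          intro i _ _
          exact Real.rpow_nonneg (Nat.cast_nonneg i) _
      _ ≤ D * (2 * Real.sqrt (K:ℝ)) := by
          apply mul_le_mul_of_nonneg_left (aux_sum_sqrt K) (by linarith : (0:ℝ) ≤ D)
      _ ≤ D * (2 * (c * z * D)) := by
          apply mul_le_mul_of_nonneg_left _ (by linarith : (0:ℝ) ≤ D)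
          linarith [step3]
      _ = 2 * c * D^2 * z := by ring

set_option maxHeartbeats 1000000 in
private lemma aux_main_bound {Ω : Type*} [MeasurableSpace Ω] (μ : Measure Ω)
    [IsProbabilityMeasure μ]
    (η : ℕ → Ω → ℝ) (hmeas : ∀ k, Measurable (η k))
    (hident : ∀ k, IdentDistrib (η k) (η 1) μ μ)
    (hL2 : MemLp (η 1) 2 μ)
    (hmean : μ[η 1] = 0) (hvar : variance (η 1) μ = 1)
    (α : ℝ) (ρ : ℝ) (hρ : 0 < ρ) {s : ℝ} (hs : 0 < s) (hs' : s < Real.exp (-Real.exp 1)) :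
    Real.sqrt (s ^ (1 + 2 * α) / Real.log (Real.log (1 / s))) *
          ∑' k : ℕ, (if ⌊1 / s⌋₊ + 1 ≤ k then
              (k : ℝ) ^ (-(1/2 : ℝ) - s) * Real.log k ^ α *
                ∫ ω, (if ρ * (Real.log k ^ α)⁻¹ * (Real.log (1 / s))⁻¹ *
                    Real.sqrt ((k : ℝ) ^ (1 + s) / (s ^ (1 + 2 * α) * Real.log (Real.log (1 / s))))
                      < |η k ω| then |η k ω| else 0) ∂μ
            else 0)
      ≤ 2/ρ * s^(1+2*α) * Real.log (1/s) *
          (max 1 ((2 * max α 0 / s) ^ (max α 0)))^2 := by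
  classical
  obtain ⟨hL1, hM1⟩ := aux_s_facts hs hs'
  have hL0 : (0:ℝ) < Real.log (1/s) := by linarith
  have hM0 : (0:ℝ) < Real.log (Real.log (1/s)) := by linarith
  have hD1 : (1:ℝ) ≤ max 1 ((2 * max α 0 / s) ^ (max α 0)) := le_max_left _ _
  set β := max α 0 with hβdef
  set L := Real.log (1/s) with hLdef
  set M := Real.log L with hMdef
  set D := max 1 ((2 * β / s) ^ β) with hDdef
  set c : ℝ := ρ⁻¹ * L * Real.sqrt (s^(1+2*α) * M) with hcdef
  have hc0 : 0 ≤ c := mul_nonneg (mul_nonneg (inv_nonneg.2 hρ.le) hL0.le) (Real.sqrt_nonneg _)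
  have hG0 : (0:ℝ) ≤ 2*c*D^2 := by positivity
  -- measurability of truncation maps
  have hfmeas : ∀ k : ℕ, Measurable (fun y : ℝ =>
      if ρ * (Real.log k ^ α)⁻¹ * L⁻¹ * Real.sqrt ((k:ℝ)^(1+s)/(s^(1+2*α)*M)) < |y|
        then |y| else 0) := by
    intro k
    exact Measurable.ite (measurableSet_lt measurable_const measurable_abs)
      measurable_abs measurable_const
  have hint1 : Integrable (η 1) μ := hL2.integrable one_le_two
  have hintf : ∀ k : ℕ, Integrable (fun ω =>
      if ρ * (Real.log k ^ α)⁻¹ * L⁻¹ * Real.sqrt ((k:ℝ)^(1+s)/(s^(1+2*α)*M)) < |η 1 ω|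
        then |η 1 ω| else 0) μ := by
    intro k
    apply hint1.mono (((hfmeas k).comp (hmeas 1)).aestronglyMeasurable)
    filter_upwards with ω
    simp only [Function.comp_apply]
    split_ifs
    · simp
    · simp [abs_nonneg]
  set H : ℕ → Ω → ℝ := fun k ω => if ⌊1/s⌋₊ + 1 ≤ k then
      (k:ℝ)^(-(1/2:ℝ)-s) * Real.log k ^ α *
        (if ρ * (Real.log k ^ α)⁻¹ * L⁻¹ * Real.sqrt ((k:ℝ)^(1+s)/(s^(1+2*α)*M)) < |η 1 ω|
          then |η 1 ω| else 0)
      else 0 with hHdef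
  have hintH : ∀ k, Integrable (H k) μ := by
    intro k
    by_cases h : ⌊1/s⌋₊ + 1 ≤ k
    · simp only [hHdef, h, if_true]
      exact (hintf k).const_mul _
    · simp only [hHdef, h, if_false]
      exact integrable_zero _ _ _
  have heq : ∀ k : ℕ, (if ⌊1/s⌋₊ + 1 ≤ k then
      (k : ℝ) ^ (-(1/2 : ℝ) - s) * Real.log k ^ α *
        ∫ ω, (if ρ * (Real.log k ^ α)⁻¹ * L⁻¹ *
            Real.sqrt ((k : ℝ) ^ (1 + s) / (s ^ (1 + 2 * α) * M))
              < |η k ω| then |η k ω| else 0) ∂μ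
      else 0) = ∫ ω, H k ω ∂μ := by
    intro k
    by_cases h : ⌊1/s⌋₊ + 1 ≤ k
    · simp only [hHdef, h, if_true]
      rw [integral_const_mul]
      congr 1
      have := (((hident k).comp (hfmeas k)).integral_eq)
      simpa [Function.comp] using this
    · simp only [hHdef, h, if_false, integral_zero]
  have hEsq : ∫ ω, (η 1 ω)^2 ∂μ = 1 := by
    have hv := variance_eq_sub hL2
    rw [hmean, hvar] at hv
    simp only [Pi.pow_apply] at hv
    nlinarith [hv]
  have hFsum : ∀ F : Finset ℕ, (∑ k ∈ F, (if ⌊1/s⌋₊ + 1 ≤ k then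
      (k : ℝ) ^ (-(1/2 : ℝ) - s) * Real.log k ^ α *
        ∫ ω, (if ρ * (Real.log k ^ α)⁻¹ * L⁻¹ *
            Real.sqrt ((k : ℝ) ^ (1 + s) / (s ^ (1 + 2 * α) * M))
              < |η k ω| then |η k ω| else 0) ∂μ
      else 0)) ≤ 2*c*D^2 := by
    intro F
    rw [Finset.sum_congr rfl (fun k _ => heq k), ← integral_finset_sum F (fun k _ => hintH k)]
    have hsqint : Integrable (fun ω => 2*c*D^2 * (η 1 ω)^2) μ := by
      have := hL2.integrable_sq
      simpa [Pi.pow_apply] using this.const_mul (2*c*D^2)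
    calc ∫ ω, ∑ k ∈ F, H k ω ∂μ ≤ ∫ ω, 2*c*D^2 * (η 1 ω)^2 ∂μ := by
          apply integral_mono (integrable_finset_sum F (fun k _ => hintH k)) hsqint
          intro ω
          set z := |η 1 ω| with hzdef
          have hz : 0 ≤ z := abs_nonneg _
          have hHk : ∀ k : ℕ, H k ω = if (⌊1/s⌋₊ + 1 ≤ k ∧
              ρ * (Real.log k ^ α)⁻¹ * L⁻¹ * Real.sqrt ((k:ℝ)^(1+s)/(s^(1+2*α)*M)) < z)
              then ((k:ℝ)^(-(1/2:ℝ)-s) * Real.log k ^ α) * z else 0 := by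
            intro k
            simp only [hHdef]
            rw [← hzdef]
            split_ifs with h1 h2 h3 <;> first | rfl | (exfalso; tauto) | simp
          have hzz : z * z = (η 1 ω)^2 := by rw [hzdef, abs_mul_abs_self, sq]
          calc ∑ k ∈ F, H k ω
              = ∑ k ∈ F, (if (⌊1/s⌋₊ + 1 ≤ k ∧
                  ρ * (Real.log k ^ α)⁻¹ * L⁻¹ * Real.sqrt ((k:ℝ)^(1+s)/(s^(1+2*α)*M)) < z)
                  then ((k:ℝ)^(-(1/2:ℝ)-s) * Real.log k ^ α) * z else 0) :=
                Finset.sum_congr rfl (fun k _ => hHk k)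
            _ = ∑ k ∈ F.filter (fun k => ⌊1/s⌋₊ + 1 ≤ k ∧
                  ρ * (Real.log k ^ α)⁻¹ * L⁻¹ * Real.sqrt ((k:ℝ)^(1+s)/(s^(1+2*α)*M)) < z),
                  ((k:ℝ)^(-(1/2:ℝ)-s) * Real.log k ^ α) * z := (Finset.sum_filter _ _).symm
            _ = (∑ k ∈ F.filter (fun k => ⌊1/s⌋₊ + 1 ≤ k ∧
                  ρ * (Real.log k ^ α)⁻¹ * L⁻¹ * Real.sqrt ((k:ℝ)^(1+s)/(s^(1+2*α)*M)) < z),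
                  (k:ℝ)^(-(1/2:ℝ)-s) * Real.log k ^ α) * z := by rw [Finset.sum_mul]
            _ ≤ (2 * c * D^2 * z) * z := by
                apply mul_le_mul_of_nonneg_right _ hz
                apply aux_filter_sum α hρ hs hs' hz
                intro k hk
                exact (Finset.mem_filter.1 hk).2
            _ = 2*c*D^2 * (z*z) := by ring
            _ = 2*c*D^2 * (η 1 ω)^2 := by rw [hzz]
      _ = 2*c*D^2 * ∫ ω, (η 1 ω)^2 ∂μ := integral_const_mul _ _
      _ = 2*c*D^2 := by rw [hEsq]; ring
  have htsum : (∑' k : ℕ, (if ⌊1/s⌋₊ + 1 ≤ k then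
      (k : ℝ) ^ (-(1/2 : ℝ) - s) * Real.log k ^ α *
        ∫ ω, (if ρ * (Real.log k ^ α)⁻¹ * L⁻¹ *
            Real.sqrt ((k : ℝ) ^ (1 + s) / (s ^ (1 + 2 * α) * M))
              < |η k ω| then |η k ω| else 0) ∂μ
      else 0)) ≤ 2*c*D^2 := tsum_le_of_sum_le' hG0 hFsum
  have hsqrtmul : Real.sqrt (s^(1+2*α)/M) * Real.sqrt (s^(1+2*α)*M) = s^(1+2*α) := by
    rw [← Real.sqrt_mul (by positivity)]
    rw [show s^(1+2*α)/M*(s^(1+2*α)*M) = s^(1+2*α)*s^(1+2*α) by field_simp]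
    exact Real.sqrt_mul_self (by positivity)
  calc Real.sqrt (s^(1+2*α)/M) * ∑' k : ℕ, (if ⌊1/s⌋₊ + 1 ≤ k then
      (k : ℝ) ^ (-(1/2 : ℝ) - s) * Real.log k ^ α *
        ∫ ω, (if ρ * (Real.log k ^ α)⁻¹ * L⁻¹ *
            Real.sqrt ((k : ℝ) ^ (1 + s) / (s ^ (1 + 2 * α) * M))
              < |η k ω| then |η k ω| else 0) ∂μ
      else 0)
      ≤ Real.sqrt (s^(1+2*α)/M) * (2*c*D^2) :=
        mul_le_mul_of_nonneg_left htsum (Real.sqrt_nonneg _)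
    _ = 2/ρ * (Real.sqrt (s^(1+2*α)/M) * Real.sqrt (s^(1+2*α)*M)) * L * D^2 := by
        rw [hcdef]
        field_simp
    _ = 2/ρ * s^(1+2*α) * L * D^2 := by rw [hsqrtmul]

/-- The truncated-expectation tail term vanishes on the LIL scale: for i.i.d. centered
unit-variance `(η_k)`, `α > -1/2` and every `ρ > 0`,
`(s^(1+2α)/log log(1/s))^(1/2) ∑_{k ≥ ⌊1/s⌋+1} k^(-1/2-s) (log k)^α E[|η_k| 1_{A_{k,ρ}(s)}] → 0`
as `s → 0+`, where
`A_{k,ρ}(s) = {|η_k| > ρ (log k)^(-α) (log(1/s))^(-1) (k^(1+s)/(s^(1+2α) log log(1/s)))^(1/2)}`. -/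
theorem stmt10 {Ω : Type*} [MeasurableSpace Ω] (μ : Measure Ω) [IsProbabilityMeasure μ]
    (η : ℕ → Ω → ℝ) (hmeas : ∀ k, Measurable (η k))
    (hindep : iIndepFun η μ)
    (hident : ∀ k, IdentDistrib (η k) (η 1) μ μ)
    (hL2 : MemLp (η 1) 2 μ)
    (hmean : μ[η 1] = 0) (hvar : variance (η 1) μ = 1)
    (α : ℝ) (hα : -(1/2 : ℝ) < α) (ρ : ℝ) (hρ : 0 < ρ) :
    Tendsto (fun s : ℝ =>
        Real.sqrt (s ^ (1 + 2 * α) / Real.log (Real.log (1 / s))) *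
          ∑' k : ℕ, (if ⌊1 / s⌋₊ + 1 ≤ k then
              (k : ℝ) ^ (-(1/2 : ℝ) - s) * Real.log k ^ α *
                ∫ ω, (if ρ * (Real.log k ^ α)⁻¹ * (Real.log (1 / s))⁻¹ *
                    Real.sqrt ((k : ℝ) ^ (1 + s) / (s ^ (1 + 2 * α) * Real.log (Real.log (1 / s))))
                      < |η k ω| then |η k ω| else 0) ∂μ
            else 0))
      (nhdsWithin 0 (Set.Ioi 0)) (nhds 0) := by
  have hp : (0:ℝ) < 1 + 2*α := by linarith
  -- tendsto of the bounding function
  have hB : Tendsto (fun s : ℝ => 2/ρ * s^(1+2*α) * Real.log (1/s) *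
      (max 1 ((2 * max α 0 / s) ^ (max α 0)))^2) (nhdsWithin 0 (Set.Ioi 0)) (nhds 0) := by
    rcases le_or_gt α 0 with hα0 | hα0
    · have hβ0 : max α 0 = 0 := max_eq_right hα0
      have heq : (fun s : ℝ => 2/ρ * s^(1+2*α) * Real.log (1/s) *
          (max 1 ((2 * max α 0 / s) ^ (max α 0)))^2)
          = fun s : ℝ => -(2/ρ) * (Real.log s * s^(1+2*α)) := by
        funext s
        rw [hβ0, Real.rpow_zero, max_self, one_pow, mul_one, one_div, Real.log_inv]
        ring
      rw [heq]
      have := (tendsto_log_mul_rpow_nhdsGT_zero hp).const_mul (-(2/ρ))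
      simpa using this
    · have hβα : max α 0 = α := max_eq_left hα0.le
      have hev : (fun s : ℝ => -(2/ρ * (2*α)^(2*α)) * (Real.log s * s^(1:ℝ)))
          =ᶠ[nhdsWithin 0 (Set.Ioi 0)] (fun s : ℝ => 2/ρ * s^(1+2*α) * Real.log (1/s) *
          (max 1 ((2 * max α 0 / s) ^ (max α 0)))^2) := by
        filter_upwards [Ioo_mem_nhdsGT (show (0:ℝ) < 2*α by linarith)] with s hsm
        obtain ⟨hs0, hs2⟩ := hsm
        have hone : (1:ℝ) ≤ (2*α/s)^α := by
          calc (1:ℝ) = 1^α := (Real.one_rpow α).symm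
            _ ≤ (2*α/s)^α := by
                apply Real.rpow_le_rpow zero_le_one _ hα0.le
                rw [le_div_iff₀ hs0]
                linarith
        have hmax : max 1 ((2 * max α 0 / s) ^ (max α 0)) = (2*α/s)^α := by
          rw [hβα]
          exact max_eq_right hone
        have hsq2 : ((2*α/s)^α)^2 = (2*α)^(2*α) / s^(2*α) := by
          rw [sq, ← Real.rpow_add (by positivity), ← Real.div_rpow (by linarith) hs0.le]
          congr 1
          ring
        have hpow : s^(1+2*α) = s * s^(2*α) := by
          rw [Real.rpow_add hs0, Real.rpow_one]
        have hs2α : (0:ℝ) < s^(2*α) := Real.rpow_pos_of_pos hs0 _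
        rw [hmax, hsq2, hpow, one_div, Real.log_inv, Real.rpow_one]
        field_simp
      apply Tendsto.congr' hev
      have := (tendsto_log_mul_rpow_nhdsGT_zero one_pos).const_mul (-(2/ρ * (2*α)^(2*α)))
      simpa using this
  apply tendsto_of_tendsto_of_tendsto_of_le_of_le' tendsto_const_nhds hB
  · -- nonnegativity
    apply Filter.Eventually.of_forall
    intro s
    apply mul_nonneg (Real.sqrt_nonneg _)
    apply tsum_nonneg
    intro k
    split_ifs with h
    · apply mul_nonneg (mul_nonneg (Real.rpow_nonneg (Nat.cast_nonneg k) _)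
        (Real.rpow_nonneg (Real.log_natCast_nonneg k) _))
      apply integral_nonneg
      intro ω
      dsimp only
      split_ifs
      exacts [abs_nonneg _, le_refl 0]
    · exact le_refl 0
  · filter_upwards [Ioo_mem_nhdsGT (Real.exp_pos (-Real.exp 1))] with s hsm
    exact aux_main_bound μ η hmeas hident hL2 hmean hvar α ρ hρ hsm.1 hsm.2
end
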